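/- Let V be a finite-dimensional complex inner product space of dimension D, and let W₁, …, W_m ⊆ V be subspaces, each of dimension d with 0 < d < D, whose orthogonal projections Π₁, …, Π_m satisfy tr(Π_i Π_j) = d²/D for all i ≠ j (i.e., the family is independent). Let W = span(W₁ ∪ ⋯ ∪ W_m). Then dim W / D ≥ 1 − 1/(1 + md/(D−d)); equivalently, dim W ≥ mdD/(D + (m−1)d). -/

import Mathlib

open scoped Classical

private lemma trace_eq_sum_eigen_aux {V : Type*} [NormedAddCommGroup V] [InnerProductSpace ℂ V]
    [FiniteDimensional ℂ V] {D : ℕ} (b : OrthonormalBasis (Fin D) ℂ V)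
    (T : V →ₗ[ℂ] V) (μ : Fin D → ℝ) (h : ∀ i, T (b i) = (μ i : ℂ) • b i) :
    LinearMap.trace ℂ V T = ∑ i, (μ i : ℂ) := by
  rw [LinearMap.trace_eq_matrix_trace ℂ b.toBasis, Matrix.trace]
  apply Finset.sum_congr rfl
  intro i _
  have hb : b.toBasis i = b i := b.coe_toBasis ▸ rfl
  rw [Matrix.diag_apply, LinearMap.toMatrix_apply, hb, h i, map_smul, ← hb, Module.Basis.repr_self,
    Finsupp.smul_apply, Finsupp.single_eq_same, smul_eq_mul, mul_one]

theorem dim_span_of_independent_family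
    {V : Type*} [NormedAddCommGroup V] [InnerProductSpace ℂ V] [FiniteDimensional ℂ V]
    (D d m : ℕ) (hD : Module.finrank ℂ V = D) (hd0 : 0 < d) (hdD : d < D)
    (W : Fin m → Submodule ℂ V) (hdim : ∀ i, Module.finrank ℂ (W i) = d)
    (hind : ∀ i j, i ≠ j →
      LinearMap.trace ℂ V
          (((W i).subtypeL.comp ((W i).orthogonalProjection)).toLinearMap ∘ₗ
            ((W j).subtypeL.comp ((W j).orthogonalProjection)).toLinearMap) =
        (d : ℂ) ^ 2 / (D : ℂ)) :
    (Module.finrank ℂ ↥(⨆ i, W i) : ℝ) / (D : ℝ) ≥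
        1 - 1 / (1 + (m : ℝ) * d / ((D : ℝ) - d)) ∧
      (Module.finrank ℂ ↥(⨆ i, W i) : ℝ) ≥
        (m : ℝ) * d * D / ((D : ℝ) + ((m : ℝ) - 1) * d) := by
  have hDd : (0:ℝ) < (D:ℝ) - d := by
    have : (d:ℝ) < D := by exact_mod_cast hdD
    linarith
  rcases Nat.eq_zero_or_pos m with hm | hm
  · subst hm
    have hsup : (⨆ i : Fin 0, W i) = ⊥ := by simp
    rw [hsup]
    simp only [finrank_bot, Nat.cast_zero, CharP.cast_eq_zero, zero_mul, zero_div, zero_mul,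
      zero_sub, neg_mul]
    constructor
    · norm_num
    · exact le_refl 0
  · -- main case
    set P : Fin m → (V →ₗ[ℂ] V) :=
      fun i => ((W i).subtypeL.comp ((W i).orthogonalProjection)).toLinearMap with hP
    set S : V →ₗ[ℂ] V := ∑ i, P i with hSdef
    have hPsymm : ∀ i, (P i).IsSymmetric := fun i => (W i).starProjection_isSymmetric
    have hS : S.IsSymmetric := by
      intro x y
      simp only [hSdef, LinearMap.sum_apply, sum_inner, inner_sum]
      exact Finset.sum_congr rfl fun i _ => hPsymm i x y
    -- projections
    have hPapply : ∀ i x, P i x = ↑((W i).orthogonalProjection x) := fun i x => rfl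
    have hPidem : ∀ i, P i ∘ₗ P i = P i := by
      intro i
      ext x
      simp only [LinearMap.comp_apply, hPapply]
      congr 1
      exact Submodule.orthogonalProjection_mem_subspace_eq_self _
    have hPproj : ∀ i, LinearMap.IsProj (W i) (P i) := by
      intro i
      refine ⟨fun x => ((W i).orthogonalProjection x).2, fun x hx => ?_⟩
      rw [hPapply]
      exact congrArg _ (Submodule.orthogonalProjection_mem_subspace_eq_self (⟨x, hx⟩ : W i))
    have htrP : ∀ i, LinearMap.trace ℂ V (P i) = (d : ℂ) := by
      intro i
      rw [(hPproj i).trace, hdim i]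
    -- eigen decomposition
    let b := hS.eigenvectorBasis hD
    let μ := hS.eigenvalues hD
    have hbS : ∀ i, S (b i) = (μ i : ℂ) • b i := fun i => hS.apply_eigenvectorBasis hD i
    -- trace S
    have htrS : LinearMap.trace ℂ V S = (m : ℂ) * d := by
      rw [hSdef, map_sum]
      rw [Finset.sum_congr rfl fun i _ => htrP i, Finset.sum_const, Finset.card_univ,
        Fintype.card_fin, nsmul_eq_mul]
    have hsum1 : ∑ i, μ i = (m : ℝ) * d := by
      have h1 : (∑ i, (μ i : ℂ)) = ((m : ℝ) * d : ℝ) := by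
        rw [← trace_eq_sum_eigen_aux b S μ hbS, htrS]; push_cast; ring
      exact_mod_cast (Complex.ofReal_sum Finset.univ μ) ▸ h1
    -- trace S²
    have htrS2 : LinearMap.trace ℂ V (S ∘ₗ S) =
        (m : ℂ) * d + m * (m - 1) * ((d:ℂ)^2 / D) := by
      have hcomp : S ∘ₗ S = ∑ i, ∑ j, P i ∘ₗ P j := by
        rw [← Module.End.mul_eq_comp, hSdef, Finset.sum_mul_sum]
        simp_rw [Module.End.mul_eq_comp]
      rw [hcomp, map_sum]
      have hrow : ∀ i : Fin m, LinearMap.trace ℂ V (∑ j, P i ∘ₗ P j) =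
          (d : ℂ) + (m - 1) * ((d:ℂ)^2 / D) := by
        intro i
        rw [map_sum, ← Finset.add_sum_erase _ _ (Finset.mem_univ i)]
        congr 1
        · rw [hPidem i, htrP i]
        · rw [Finset.sum_congr rfl fun j hj => hind i j (Ne.symm (Finset.ne_of_mem_erase hj)),
            Finset.sum_const, Finset.card_erase_of_mem (Finset.mem_univ _), Finset.card_univ,
            Fintype.card_fin, nsmul_eq_mul, Nat.cast_sub hm, Nat.cast_one]
      rw [Finset.sum_congr rfl fun i _ => hrow i, Finset.sum_const, Finset.card_univ,
        Fintype.card_fin, nsmul_eq_mul]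
      ring
    have hsum2 : ∑ i, (μ i)^2 = (m : ℝ) * d + m * (m - 1) * ((d:ℝ)^2 / D) := by
      have hb2 : ∀ i, (S ∘ₗ S) (b i) = (((μ i)^2 : ℝ) : ℂ) • b i := by
        intro i
        rw [LinearMap.comp_apply, hbS i, map_smul, hbS i, smul_smul]
        push_cast
        ring_nf
      have h1 : (∑ i, ((μ i ^ 2 : ℝ) : ℂ)) =
          (((m : ℝ) * d + m * (m - 1) * ((d:ℝ)^2 / D) : ℝ) : ℂ) := by
        rw [← trace_eq_sum_eigen_aux b (S ∘ₗ S) (fun i => (μ i)^2) hb2, htrS2]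
        have hD0 : (D:ℝ) ≠ 0 := by
          have : (0:ℕ) < D := lt_trans hd0 hdD
          exact_mod_cast this.ne'
        push_cast
        ring
      exact_mod_cast h1
    -- eigenvectors with nonzero eigenvalue lie in the span
    have hrange : ∀ x, S x ∈ ⨆ i, W i := by
      intro x
      rw [hSdef]
      simp only [LinearMap.sum_apply]
      exact Submodule.sum_mem _ fun i _ =>
        Submodule.mem_iSup_of_mem i (((W i).orthogonalProjection x).2)
    set t : Finset (Fin D) := Finset.univ.filter (fun i => μ i ≠ 0) with ht
    have hbt : ∀ i ∈ t, b i ∈ ⨆ i, W i := by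
      intro i hi
      have hμ : (μ i : ℂ) ≠ 0 := by
        simp only [ht, Finset.mem_filter] at hi
        exact_mod_cast hi.2
      have : b i = (μ i : ℂ)⁻¹ • S (b i) := by
        rw [hbS i, smul_smul, inv_mul_cancel₀ hμ, one_smul]
      rw [this]
      exact Submodule.smul_mem _ _ (hrange _)
    -- card t ≤ finrank of span
    have hcard : (t.card : ℝ) ≤ (Module.finrank ℂ ↥(⨆ i, W i) : ℝ) := by
      have hli : LinearIndependent ℂ (fun i : (t : Set (Fin D)) => b i) :=
        (b.orthonormal.linearIndependent).comp _ Subtype.val_injective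
      have hspan : Submodule.span ℂ (Set.range (fun i : (t : Set (Fin D)) => b i)) ≤ ⨆ i, W i := by
        rw [Submodule.span_le]
        rintro _ ⟨⟨i, hi⟩, rfl⟩
        exact hbt i hi
      have := Submodule.finrank_mono hspan
      rw [finrank_span_eq_card hli] at this
      have hct : Fintype.card (t : Set (Fin D)) = t.card := Fintype.card_coe t
      exact_mod_cast hct ▸ this
    -- Cauchy-Schwarz
    have hCS : ((m:ℝ) * d)^2 ≤ (Module.finrank ℂ ↥(⨆ i, W i) : ℝ) *
        ((m : ℝ) * d + m * (m - 1) * ((d:ℝ)^2 / D)) := by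
      have h1 : ∑ i ∈ t, μ i = ∑ i, μ i := Finset.sum_filter_ne_zero _
      have h2 : ∑ i ∈ t, (μ i)^2 = ∑ i, (μ i)^2 := by
        apply Finset.sum_filter_of_ne
        intro i _ h
        exact fun h0 => h (by rw [h0]; ring)
      have hcs := sq_sum_le_card_mul_sum_sq (s := t) (f := μ)
      rw [h1, h2, hsum1, hsum2] at hcs
      have hsq : (0:ℝ) ≤ ∑ i, (μ i)^2 := Finset.sum_nonneg fun i _ => sq_nonneg _
      calc ((m:ℝ)*d)^2 ≤ (t.card : ℝ) * ((m : ℝ) * d + m * (m - 1) * ((d:ℝ)^2 / D)) := hcs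
        _ ≤ _ := by
            apply mul_le_mul_of_nonneg_right hcard
            rw [← hsum2]; exact hsq
    -- final arithmetic
    set n : ℝ := (Module.finrank ℂ ↥(⨆ i, W i) : ℝ) with hn
    have hM : (1:ℝ) ≤ m := by exact_mod_cast hm
    have hA : (1:ℝ) ≤ d := by exact_mod_cast hd0
    have hDpos : (0:ℝ) < D := by linarith
    have hQ : 0 < (D:ℝ) + ((m:ℝ)-1) * d := by nlinarith
    have hn0 : 0 ≤ n := Nat.cast_nonneg _
    have hD0 : (D:ℝ) ≠ 0 := ne_of_gt hDpos
    have key2 : ((m:ℝ)*d)^2 * D ≤ n * ((m:ℝ)*d*D + m*(m-1)*d^2) := by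
      calc ((m:ℝ)*d)^2 * D ≤ (n * ((m:ℝ)*d + m*(m-1)*((d:ℝ)^2/D))) * D :=
            mul_le_mul_of_nonneg_right hCS (le_of_lt hDpos)
        _ = n * ((m:ℝ)*d*D + m*(m-1)*d^2) := by field_simp
    have g2 : n ≥ (m:ℝ)*d*D / ((D:ℝ) + ((m:ℝ)-1)*d) := by
      rw [ge_iff_le, div_le_iff₀ hQ]
      have hMA : 0 < (m:ℝ)*d := by nlinarith
      have h3 : ((m:ℝ)*d) * ((m:ℝ)*d*D) ≤ ((m:ℝ)*d) * (n * ((D:ℝ)+((m:ℝ)-1)*d)) := by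
        nlinarith [key2]
      exact le_of_mul_le_mul_left h3 hMA
    refine ⟨?_, g2⟩
    have e : 1 - 1/(1+(m:ℝ)*d/((D:ℝ)-d)) = ((m:ℝ)*d*D/((D:ℝ)+((m:ℝ)-1)*d))/D := by
      have h1 : (D:ℝ)-d ≠ 0 := ne_of_gt hDd
      have h3 : (D:ℝ)+((m:ℝ)-1)*d ≠ 0 := ne_of_gt hQ
      have h4 : 1 + (m:ℝ)*d/((D:ℝ)-d) ≠ 0 := by
        have h5 : 0 ≤ (m:ℝ)*d/((D:ℝ)-d) := div_nonneg (by positivity) (le_of_lt hDd)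
        linarith
      rw [show 1 + (m:ℝ)*d/((D:ℝ)-d) = ((D:ℝ)+((m:ℝ)-1)*d)/((D:ℝ)-d) by field_simp; ring]
      field_simp
      ring
    rw [ge_iff_le, e]
    gcongr
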